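/- Let Σ_τ : ℝ → [H₀′ ⊕ Ĥ₂] be a nondecreasing operator-valued distribution function of block form Σ_τ(s) = [[Σ₁(s), Σ₂(s)],[Σ₃(s), (s/2π)·I]]. If Σ_τ = Σ_ac + Σ_s is its Lebesgue decomposition into absolutely continuous and singular parts, then Σ_s(s) = [[Σ_{1,s}(s), 0],[0, 0]], where Σ_{1,s} is the singular part of Σ₁; i.e., the singular part of Σ_τ is supported entirely in the (1,1)-block. -/

import Mathlib

/- STATEMENT 13: for a nondecreasing block distribution function
`Σ_τ(s) = [[Sg₁(s), Sg₂(s)],[Sg₃(s), (s/2π)·I]]` on `H₀′ ⊕ Ĥ₂`, the singular part in the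
Lebesgue decomposition `Σ_τ = Σ_ac + Σ_s` is supported entirely in the (1,1)-block:
`Σ_s(s) = [[Σ_{1,s}(s), 0],[0, 0]]`.  Absolute continuity of the `ac` part is expressed
by an integral representation, singularity by vanishing derivative a.e. -/

open scoped ComplexInnerProductSpace
open MeasureTheory Set

namespace Statement13Aux

variable {W : Type*} [NormedAddCommGroup W] [InnerProductSpace ℂ W]

lemma symm_of_im_zero (T : W →L[ℂ] W) (h : ∀ v : W, (⟪v, T v⟫).im = 0) :
    ∀ u w : W, ⟪T u, w⟫ = ⟪u, T w⟫ := by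
  have hs : LinearMap.IsSymmetric (T : W →ₗ[ℂ] W) := by
    rw [LinearMap.isSymmetric_iff_inner_map_self_real]
    intro v
    show (starRingEnd ℂ) ⟪T v, v⟫ = ⟪T v, v⟫
    have h1 : ⟪T v, v⟫ = (starRingEnd ℂ) ⟪v, T v⟫ := (inner_conj_symm _ _).symm
    have hz : (starRingEnd ℂ) ⟪v, T v⟫ = ⟪v, T v⟫ := Complex.conj_eq_iff_im.mpr (h v)
    rw [h1, hz]
    exact hz
  exact fun u w => hs u w

lemma apply_eq_zero_of_inner_self_eq_zero (T : W →L[ℂ] W)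
    (hsym : ∀ u w : W, ⟪T u, w⟫ = ⟪u, T w⟫)
    (hpos : ∀ u : W, 0 ≤ (⟪u, T u⟫).re) {v : W} (hv : ⟪v, T v⟫ = 0) :
    T v = 0 := by
  have hre : ∀ u : W, (⟪u, T v⟫).re = 0 := by
    intro u
    have hTv : ⟪v, T u⟫ = (starRingEnd ℂ) ⟪u, T v⟫ := by
      rw [← hsym u v, ← inner_conj_symm]
    have hquad : ∀ t : ℝ, 0 ≤ (⟪u, T u⟫).re * (t * t) + (2 * (⟪u, T v⟫).re) * t + 0 := by
      intro t
      have h0 := hpos ((t : ℂ) • u + v)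
      have hT : T ((t : ℂ) • u + v) = (t : ℂ) • T u + T v := by
        rw [map_add, ContinuousLinearMap.map_smul]
      have hexp : ⟪(t : ℂ) • u + v, T ((t : ℂ) • u + v)⟫
          = (t : ℂ) * ((t : ℂ) * ⟪u, T u⟫) + (t : ℂ) * ⟪u, T v⟫
            + (t : ℂ) * ⟪v, T u⟫ + ⟪v, T v⟫ := by
        rw [hT]
        simp only [inner_add_left, inner_add_right, inner_smul_left,
          inner_smul_right, Complex.conj_ofReal]
        ring
      rw [hexp, hv, hTv] at h0
      simp only [Complex.add_re, Complex.mul_re, Complex.ofReal_re, Complex.ofReal_im,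
        Complex.conj_re, Complex.conj_im, Complex.zero_re] at h0
      nlinarith [h0]
    have hd := discrim_le_zero hquad
    have : (2 * (⟪u, T v⟫).re) ^ 2 ≤ 0 := by
      simpa [discrim] using hd
    nlinarith [this, sq_nonneg ((⟪u, T v⟫).re)]
  have key : ∀ u : W, ⟪u, T v⟫ = 0 := by
    intro u
    have h1 := hre u
    have h2 := hre (Complex.I • u)
    rw [inner_smul_left] at h2
    simp only [Complex.conj_I, neg_mul, Complex.neg_re, Complex.mul_re, Complex.I_re,
      Complex.I_im] at h2
    apply Complex.ext h1
    simpa using h2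
  have := key (T v)
  exact inner_self_eq_zero.mp this

end Statement13Aux

set_option maxHeartbeats 1600000 in
theorem statement13 {H K : Type*}
    [NormedAddCommGroup H] [InnerProductSpace ℂ H] [FiniteDimensional ℂ H]
    [NormedAddCommGroup K] [InnerProductSpace ℂ K] [FiniteDimensional ℂ K]
    (Sg : ℝ → WithLp 2 (H × K) →L[ℂ] WithLp 2 (H × K))
    (Sg₁ : ℝ → H →L[ℂ] H) (Sg₂ : ℝ → K →L[ℂ] H) (Sg₃ : ℝ → H →L[ℂ] K)
    -- block structure, with (2,2)-entry (s/2π)·I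
    (hblock : ∀ (s : ℝ) (v : WithLp 2 (H × K)),
      Sg s v = WithLp.toLp 2 (Sg₁ s v.ofLp.1 + Sg₂ s v.ofLp.2, Sg₃ s v.ofLp.1 + ((s / (2 * Real.pi)) : ℝ) • v.ofLp.2))
    -- Σ_τ is a nondecreasing (operator-valued) distribution function
    (hmono : ∀ s t : ℝ, s ≤ t → ∀ v : WithLp 2 (H × K),
      0 ≤ (⟪v, (Sg t - Sg s) v⟫).re ∧ (⟪v, (Sg t - Sg s) v⟫).im = 0)
    (hzero : Sg 0 = 0)
    -- Lebesgue decomposition Σ_τ = Σ_ac + Σ_s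
    (A S : ℝ → WithLp 2 (H × K) →L[ℂ] WithLp 2 (H × K))
    (hsplit : ∀ s, Sg s = A s + S s) (hA0 : A 0 = 0) (hS0 : S 0 = 0)
    -- Σ_ac is absolutely continuous: an indefinite integral
    (g : ℝ → WithLp 2 (H × K) →L[ℂ] WithLp 2 (H × K))
    (hg : ∀ s : ℝ, IntervalIntegrable g MeasureTheory.volume 0 s)
    (hAint : ∀ s : ℝ, A s = ∫ t in (0 : ℝ)..s, g t)
    -- Σ_s is nondecreasing and singular (derivative 0 a.e.)
    (hSmono : ∀ s t : ℝ, s ≤ t → ∀ v : WithLp 2 (H × K),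
      0 ≤ (⟪v, (S t - S s) v⟫).re ∧ (⟪v, (S t - S s) v⟫).im = 0)
    (hSsing : ∀ᵐ t ∂MeasureTheory.volume, HasDerivAt S 0 t) :
    -- the singular part has only the (1,1)-block: Σ_s = [[Σ_{1,s}, 0],[0,0]]
    (∀ (s : ℝ) (y : K), S s (WithLp.toLp 2 ((0, y) : H × K)) = 0) ∧
    (∀ (s : ℝ) (v : WithLp 2 (H × K)), (S s v).ofLp.2 = 0) := by
  classical
  -- imaginary parts of the quadratic form of S vanish
  have hSim : ∀ (s : ℝ) (v : WithLp 2 (H × K)), (⟪v, S s v⟫).im = 0 := by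
    intro s v
    rcases le_or_gt 0 s with h | h
    · have h2 := (hSmono 0 s h v).2
      simpa [hS0] using h2
    · have h2 := (hSmono s 0 h.le v).2
      have h3 : (S 0 - S s) v = -(S s v) := by simp [hS0]
      rw [h3, inner_neg_right] at h2
      rw [Complex.neg_im, neg_eq_zero] at h2
      exact h2
  have hsymm : ∀ s : ℝ, ∀ u w, ⟪S s u, w⟫ = ⟪u, S s w⟫ :=
    fun s => Statement13Aux.symm_of_im_zero _ (hSim s)
  have hSpos : ∀ s : ℝ, 0 ≤ s → ∀ u, 0 ≤ (⟪u, S s u⟫).re := by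
    intro s hs u
    have h2 := (hSmono 0 s hs u).1
    simpa [hS0] using h2
  have hSneg : ∀ s : ℝ, s < 0 → ∀ u, 0 ≤ (⟪u, (-(S s)) u⟫).re := by
    intro s hs u
    have h2 := (hSmono s 0 hs.le u).1
    have h3 : (S 0 - S s) u = (-(S s)) u := by simp [hS0]
    rw [h3] at h2
    exact h2
  -- THE ANALYTIC CORE
  have hquad : ∀ (s₀ : ℝ) (y : K),
      @inner ℂ (WithLp 2 (H × K)) _ (WithLp.toLp 2 ((0, y) : H × K))
        (S s₀ (WithLp.toLp 2 ((0, y) : H × K))) = 0 := by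
    intro s₀ y
    set v : WithLp 2 (H × K) := (WithLp.toLp 2 ((0, y) : H × K)) with hv
    set Lr : (WithLp 2 (H × K) →L[ℂ] WithLp 2 (H × K)) →L[ℝ] ℝ :=
      Complex.reCLM.comp (((innerSL ℂ v).comp
        (ContinuousLinearMap.apply ℂ (WithLp 2 (H × K)) v)).restrictScalars ℝ) with hLrdef
    have hLr : ∀ T : WithLp 2 (H × K) →L[ℂ] WithLp 2 (H × K), Lr T = (⟪v, T v⟫).re :=
      fun T => rfl
    set ψ : ℝ → ℝ := fun t => Lr (g t) with hψdef
    set c : ℝ := (⟪y, y⟫).re / (2 * Real.pi) with hcdef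
    have hc0 : 0 ≤ c := by
      apply div_nonneg
      · simpa using inner_self_nonneg (𝕜 := ℂ) (x := y)
      · positivity
    have hψint : ∀ a b : ℝ, IntervalIntegrable ψ MeasureTheory.volume a b := by
      intro a b
      have hgab : IntervalIntegrable g MeasureTheory.volume a b := (hg a).symm.trans (hg b)
      exact ⟨Lr.integrable_comp hgab.1, Lr.integrable_comp hgab.2⟩
    set f : ℝ → ℝ := fun t => Lr (S t) with hfdef
    have hfeq : ∀ t : ℝ, f t = c * t - ∫ u in (0 : ℝ)..t, ψ u := by
      intro t
      have h1 : S t = Sg t - A t := by rw [hsplit t]; abel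
      have h2 : Lr (Sg t) = c * t := by
        have h3 : Sg t v = WithLp.toLp 2 ((Sg₂ t) y, ((t / (2 * Real.pi)) : ℝ) • y) := by
          rw [hblock t v]
          have e1 : v.ofLp.1 = (0 : H) := rfl
          have e2 : v.ofLp.2 = y := rfl
          rw [e1, e2, map_zero, map_zero, zero_add, zero_add]
        rw [hLr, h3]
        have h4 : ⟪v, WithLp.toLp 2 ((Sg₂ t) y, ((t / (2 * Real.pi)) : ℝ) • y)⟫
            = ⟪y, ((t / (2 * Real.pi)) : ℝ) • y⟫ := by
          rw [WithLp.prod_inner_apply, WithLp.ofLp_toLp]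
          have e1 : v.ofLp.1 = (0 : H) := rfl
          rw [e1, inner_zero_left, zero_add]
        rw [h4]
        have hsm : ((t / (2 * Real.pi)) : ℝ) • y = (((t / (2 * Real.pi) : ℝ)) : ℂ) • y := by
          rw [← Complex.coe_algebraMap, algebraMap_smul]
        rw [hsm, inner_smul_right, Complex.re_ofReal_mul, hcdef]
        field_simp [Real.pi_ne_zero]
      have h4 : Lr (A t) = ∫ u in (0 : ℝ)..t, ψ u := by
        rw [hAint t]
        exact (Lr.intervalIntegral_comp_comm (hg t)).symm
      rw [hfdef]
      simp only
      rw [h1, map_sub, h2, h4]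
    have hfmono : Monotone f := by
      intro a b hab
      have h2 := (hSmono a b hab v).1
      have h3 : f b - f a = (⟪v, (S b - S a) v⟫).re := by
        simp only [hfdef, hLr, ContinuousLinearMap.sub_apply, inner_sub_right, Complex.sub_re]
      linarith
    have hfcont : Continuous f := by
      have h1 : f = fun t => c * t - ∫ u in (0 : ℝ)..t, ψ u := funext hfeq
      rw [h1]
      exact (continuous_const.mul continuous_id).sub
        (intervalIntegral.continuous_primitive hψint 0)
    set F : StieltjesFunction ℝ :=
      { toFun := f
        mono' := hfmono
        right_continuous' := fun x => (hfcont.continuousAt).continuousWithinAt } with hFdef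
    have hder : ∀ᵐ t ∂MeasureTheory.volume, HasDerivAt f 0 t := by
      filter_upwards [hSsing] with t ht
      have h1 := Lr.hasFDerivAt.comp_hasDerivAt t ht
      rw [map_zero] at h1
      exact h1
    have hrn : F.measure.rnDeriv MeasureTheory.volume =ᵐ[MeasureTheory.volume] 0 := by
      filter_upwards [F.ae_hasDerivAt, hder,
        MeasureTheory.Measure.rnDeriv_lt_top F.measure MeasureTheory.volume] with t h1 h2 h3
      have h4 : (F.measure.rnDeriv MeasureTheory.volume t).toReal = 0 := h1.unique h2
      rw [ENNReal.toReal_eq_zero_iff] at h4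
      rcases h4 with h4 | h4
      · exact h4
      · exact absurd h4 h3.ne
    have hsing : F.measure ⟂ₘ MeasureTheory.volume :=
      (MeasureTheory.Measure.rnDeriv_eq_zero _ _).mp hrn
    -- the two equal measures
    set ψp : ℝ → ENNReal := fun t => ENNReal.ofReal (ψ t) with hψp
    set ψm : ℝ → ENNReal := fun t => ENNReal.ofReal (-ψ t) with hψm
    have hofmax : ∀ x : ℝ, ENNReal.ofReal (max x 0) = ENNReal.ofReal x := by
      intro x
      rcases le_total x 0 with h | h
      · rw [max_eq_right h, ENNReal.ofReal_zero, ENNReal.ofReal_of_nonpos h]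
      · rw [max_eq_left h]
    have hmeq : F.measure + MeasureTheory.volume.withDensity ψp
        = (ENNReal.ofReal c) • MeasureTheory.volume + MeasureTheory.volume.withDensity ψm := by
      refine MeasureTheory.Measure.ext_of_Ioc' _ _ (fun a b hab => ?_) (fun a b hab => ?_)
      · -- finiteness
        rw [MeasureTheory.Measure.add_apply, MeasureTheory.withDensity_apply _ measurableSet_Ioc,
          F.measure_Ioc]
        refine ENNReal.add_ne_top.mpr ⟨ENNReal.ofReal_ne_top, ?_⟩
        have hI : MeasureTheory.IntegrableOn ψ (Ioc a b) MeasureTheory.volume := (hψint a b).1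
        have := hI.2
        rw [MeasureTheory.hasFiniteIntegral_iff_norm] at this
        refine ne_of_lt (lt_of_le_of_lt ?_ this)
        apply MeasureTheory.lintegral_mono
        intro t
        rw [hψp]
        exact ENNReal.ofReal_le_ofReal (le_abs_self _)
      · -- the values on Ioc a b
        have hab' : a ≤ b := hab.le
        have hI : MeasureTheory.IntegrableOn ψ (Ioc a b) MeasureTheory.volume := (hψint a b).1
        have hIp : MeasureTheory.IntegrableOn (fun t => max (ψ t) 0) (Ioc a b)
          MeasureTheory.volume := hI.pos_part
        have hIm : MeasureTheory.IntegrableOn (fun t => max (-ψ t) 0) (Ioc a b)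
          MeasureTheory.volume := hI.neg.pos_part
        have e1 : ∫⁻ t in Ioc a b, ψp t
            = ENNReal.ofReal (∫ t in Ioc a b, max (ψ t) 0) := by
          rw [MeasureTheory.ofReal_integral_eq_lintegral_ofReal hIp
            (MeasureTheory.ae_of_all _ fun t => le_max_right _ _)]
          apply MeasureTheory.lintegral_congr
          intro t
          exact (hofmax _).symm
        have e2 : ∫⁻ t in Ioc a b, ψm t
            = ENNReal.ofReal (∫ t in Ioc a b, max (-ψ t) 0) := by
          rw [MeasureTheory.ofReal_integral_eq_lintegral_ofReal hIm
            (MeasureTheory.ae_of_all _ fun t => le_max_right _ _)]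
          apply MeasureTheory.lintegral_congr
          intro t
          exact (hofmax _).symm
        have hsub : (∫ t in Ioc a b, max (ψ t) 0) - (∫ t in Ioc a b, max (-ψ t) 0)
            = ∫ t in Ioc a b, ψ t := by
          rw [← MeasureTheory.integral_sub hIp hIm]
          apply MeasureTheory.integral_congr_ae
          apply MeasureTheory.ae_of_all
          intro t
          simp only
          rcases le_total (ψ t) 0 with h | h
          · rw [max_eq_right h, max_eq_left (by linarith)]; ring
          · rw [max_eq_left h, max_eq_right (by linarith)]; ring
        have hioc : (∫ t in Ioc a b, ψ t) = ∫ u in a..b, ψ u :=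
          (intervalIntegral.integral_of_le hab').symm
        have hintsub : (∫ u in a..b, ψ u)
            = (∫ u in (0:ℝ)..b, ψ u) - ∫ u in (0:ℝ)..a, ψ u := by
          rw [← intervalIntegral.integral_interval_sub_left (hψint 0 b) (hψint 0 a)]
        have hreal : (f b - f a) + (∫ t in Ioc a b, max (ψ t) 0)
            = c * (b - a) + (∫ t in Ioc a b, max (-ψ t) 0) := by
          have h1 := hfeq a
          have h2 := hfeq b
          have h3 : (∫ t in Ioc a b, max (ψ t) 0) - (∫ t in Ioc a b, max (-ψ t) 0)
              = (∫ u in (0:ℝ)..b, ψ u) - ∫ u in (0:ℝ)..a, ψ u := by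
            rw [hsub, hioc, hintsub]
          nlinarith [h3]
        have hfba : 0 ≤ f b - f a := by
          have := hfmono hab'
          linarith
        have hp0 : 0 ≤ ∫ t in Ioc a b, max (ψ t) 0 :=
          MeasureTheory.integral_nonneg fun t => le_max_right _ _
        have hm0 : 0 ≤ ∫ t in Ioc a b, max (-ψ t) 0 :=
          MeasureTheory.integral_nonneg fun t => le_max_right _ _
        have hcba : 0 ≤ c * (b - a) := mul_nonneg hc0 (by linarith)
        rw [MeasureTheory.Measure.add_apply, MeasureTheory.Measure.add_apply,
          MeasureTheory.withDensity_apply _ measurableSet_Ioc,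
          MeasureTheory.withDensity_apply _ measurableSet_Ioc,
          F.measure_Ioc, MeasureTheory.Measure.smul_apply, Real.volume_Ioc, smul_eq_mul,
          e1, e2, ← ENNReal.ofReal_mul hc0, ← ENNReal.ofReal_add hfba hp0,
          ← ENNReal.ofReal_add hcba hm0]
        exact congrArg ENNReal.ofReal hreal
    -- conclude F.measure = 0
    obtain ⟨u, hu, hμu, hvolu⟩ := hsing
    have hwd : MeasureTheory.volume.withDensity ψp uᶜ = 0 := by
      rw [MeasureTheory.withDensity_apply _ hu.compl]
      exact MeasureTheory.setLIntegral_measure_zero _ _ hvolu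
    have hwd' : MeasureTheory.volume.withDensity ψm uᶜ = 0 := by
      rw [MeasureTheory.withDensity_apply _ hu.compl]
      exact MeasureTheory.setLIntegral_measure_zero _ _ hvolu
    have hμuc : F.measure uᶜ = 0 := by
      have h1 : (F.measure + MeasureTheory.volume.withDensity ψp) uᶜ = F.measure uᶜ := by
        rw [MeasureTheory.Measure.add_apply, hwd, add_zero]
      have h2 : ((ENNReal.ofReal c) • MeasureTheory.volume
          + MeasureTheory.volume.withDensity ψm : MeasureTheory.Measure ℝ) uᶜ = 0 := by
        rw [MeasureTheory.Measure.add_apply, hwd', add_zero,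
          MeasureTheory.Measure.smul_apply, hvolu, smul_eq_mul, mul_zero]
      rw [← h1, hmeq, h2]
    have hμ0 : F.measure = 0 := by
      apply MeasureTheory.Measure.measure_univ_eq_zero.mp
      apply le_antisymm _ zero_le
      calc F.measure univ = F.measure (u ∪ uᶜ) := by rw [union_compl_self]
        _ ≤ F.measure u + F.measure uᶜ := MeasureTheory.measure_union_le _ _
        _ = 0 := by rw [hμu, hμuc, add_zero]
    have hf00 : f 0 = 0 := by
      rw [hfdef]
      simp only
      rw [hS0, hLr]
      simp
    have hfs : f s₀ = 0 := by
      rcases le_or_gt 0 s₀ with h | h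
      · have h1 : F.measure (Ioc 0 s₀) = 0 := by rw [hμ0]; rfl
        rw [F.measure_Ioc] at h1
        have h2 : f s₀ - f 0 ≤ 0 := by
          by_contra h3
          push_neg at h3
          rw [ENNReal.ofReal_eq_zero] at h1
          exact absurd h1 (by show ¬ (F s₀ - F 0 ≤ 0); exact not_le.mpr h3)
        have h4 := hfmono h
        rw [hf00] at h2 h4
        linarith
      · have h1 : F.measure (Ioc s₀ 0) = 0 := by rw [hμ0]; rfl
        rw [F.measure_Ioc] at h1
        have h2 : f 0 - f s₀ ≤ 0 := by
          by_contra h3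
          push_neg at h3
          rw [ENNReal.ofReal_eq_zero] at h1
          exact absurd h1 (by show ¬ (F 0 - F s₀ ≤ 0); exact not_le.mpr h3)
        have h4 := hfmono h.le
        rw [hf00] at h2 h4
        linarith
    have hre0 : (⟪v, S s₀ v⟫).re = 0 := by
      rw [← hLr (S s₀)]
      exact hfs
    exact Complex.ext hre0 (hSim s₀ v)
  -- part 1
  have part1 : ∀ (s : ℝ) (y : K), S s (WithLp.toLp 2 ((0, y) : H × K)) = 0 := by
    intro s y
    rcases le_or_gt 0 s with h | h
    · exact Statement13Aux.apply_eq_zero_of_inner_self_eq_zero (S s) (hsymm s)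
        (hSpos s h) (hquad s y)
    · have h1 := Statement13Aux.apply_eq_zero_of_inner_self_eq_zero (-(S s))
        (fun u w => by
          simp only [ContinuousLinearMap.neg_apply, inner_neg_left, inner_neg_right]
          rw [hsymm s u w])
        (hSneg s h)
        (v := (WithLp.toLp 2 ((0, y) : H × K)))
        (by simp only [ContinuousLinearMap.neg_apply, inner_neg_right, hquad s y, neg_zero])
      rw [ContinuousLinearMap.neg_apply, neg_eq_zero] at h1
      exact h1
  refine ⟨part1, ?_⟩
  intro s v
  have h3 : ∀ y' : K, ⟪y', (S s v).ofLp.2⟫ = 0 := by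
    intro y'
    have h5 : @inner ℂ (WithLp 2 (H × K)) _ (WithLp.toLp 2 ((0, y') : H × K)) (S s v)
        = @inner ℂ (WithLp 2 (H × K)) _ (S s (WithLp.toLp 2 ((0, y') : H × K))) v :=
      (hsymm s _ v).symm
    rw [part1 s y', inner_zero_left] at h5
    rw [WithLp.prod_inner_apply] at h5
    have e1 : ((WithLp.toLp 2 ((0, y') : H × K))).ofLp.1 = (0 : H) := rfl
    have e2 : ((WithLp.toLp 2 ((0, y') : H × K))).ofLp.2 = y' := rfl
    rw [e1, e2, inner_zero_left, zero_add] at h5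
    exact h5
  have h6 := h3 ((S s v).ofLp.2)
  exact inner_self_eq_zero.mp h6
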